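/- If ω ∈ ℂ is transcendental and τ > 0 is a transcendence type for ω, then τ ≥ 2. -/

import Mathlib

/-- The height of an integer polynomial: the maximum absolute value of its
coefficients. -/
noncomputable def polyHeight (P : Polynomial ℤ) : ℕ :=
  P.support.sup fun k => (P.coeff k).natAbs

/-- `τ` is a transcendence type for `ω` if there exists `c > 0` such that for
every nonzero `P ∈ ℤ[X]` of degree at most `n` and height at most `h` one has
`log|P(ω)| ≥ −c(n + log h)^τ`. -/
def IsTranscendenceType (ω : ℂ) (τ : ℝ) : Prop :=
  ∃ c > (0 : ℝ), ∀ (n : ℕ) (h : ℝ) (P : Polynomial ℤ), P ≠ 0 →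
    P.natDegree ≤ n → (polyHeight P : ℝ) ≤ h →
    -(c * ((n : ℝ) + Real.log h) ^ τ) ≤ Real.log (‖Polynomial.aeval ω P‖)

open Polynomial Finset

private lemma cell_le {N : ℕ} (hN : 1 ≤ N) {t : ℝ} (ht0 : 0 ≤ t) (htN : t ≤ N) :
    ((min (N - 1) (⌊t⌋.toNat) : ℕ) : ℝ) ≤ t ∧ t ≤ ((min (N - 1) (⌊t⌋.toNat) : ℕ) : ℝ) + 1 := by
  have hfl : ((⌊t⌋.toNat : ℕ) : ℝ) = ((⌊t⌋ : ℤ) : ℝ) := by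
    exact_mod_cast Int.toNat_of_nonneg (Int.floor_nonneg.mpr ht0)
  constructor
  · calc ((min (N - 1) (⌊t⌋.toNat) : ℕ) : ℝ) ≤ ((⌊t⌋.toNat : ℕ) : ℝ) := by
          exact_mod_cast min_le_right _ _
      _ = ((⌊t⌋ : ℤ) : ℝ) := hfl
      _ ≤ t := Int.floor_le t
  · rcases le_or_gt (⌊t⌋.toNat) (N - 1) with hc | hc
    · rw [min_eq_right hc, hfl]
      have := Int.lt_floor_add_one t
      linarith
    · rw [min_eq_left hc.le]
      have : ((N - 1 : ℕ) : ℝ) + 1 = (N : ℝ) := by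
        have : (1:ℕ) ≤ N := hN
        push_cast [this]
        ring
      rw [this]
      exact htN

private lemma key (ω : ℂ) (hω : Transcendental ℚ ω) (m H : ℕ) (hm : 1 ≤ m) (hH : 2 ≤ H) :
    ∃ Q : Polynomial ℤ, Q ≠ 0 ∧ Q.natDegree ≤ 2 * m - 1 ∧ (polyHeight Q : ℝ) ≤ (H : ℝ) ∧
      0 < ‖Polynomial.aeval ω Q‖ ∧
      ‖Polynomial.aeval ω Q‖ ≤
        8 * (2 * m * H * (max 1 (‖ω‖)) ^ (2 * m - 1)) / (H : ℝ) ^ m := by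
  set M : ℝ := max 1 (‖ω‖) with hMdef
  have hM : 1 ≤ M := le_max_left _ _
  set R : ℝ := 2 * m * H * M ^ (2 * m - 1) with hRdef
  have hR : 0 < R := by positivity
  have hHm : 2 ≤ H ^ m := le_trans hH (Nat.le_self_pow (by omega) H)
  set N : ℕ := H ^ m - 1 with hNdef
  have hN : 1 ≤ N := by omega
  have hNpos : (0:ℝ) < N := by exact_mod_cast hN
  set δ : ℝ := 2 * R / N with hδdef
  have hδ : 0 < δ := by positivity
  -- the value map
  set v : (Fin (2 * m) → Fin H) → ℂ := fun f => ∑ k : Fin (2 * m), ((f k : ℕ) : ℂ) * ω ^ (k : ℕ)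
    with hvdef
  have hv : ∀ f, ‖v f‖ ≤ R := by
    intro f
    calc ‖v f‖ ≤ ∑ k : Fin (2 * m), ‖((f k : ℕ) : ℂ) * ω ^ (k : ℕ)‖ := by
          exact norm_sum_le _ _
      _ ≤ ∑ _k : Fin (2 * m), (H : ℝ) * M ^ (2 * m - 1) := by
          apply Finset.sum_le_sum
          intro k _
          rw [norm_mul, norm_pow]
          have h1 : ‖((f k : ℕ) : ℂ)‖ ≤ (H : ℝ) := by
            rw [Complex.norm_natCast]
            exact_mod_cast (f k).isLt.le
          have h2 : ‖ω‖ ^ (k : ℕ) ≤ M ^ (2 * m - 1) := by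
            calc ‖ω‖ ^ (k:ℕ) ≤ M ^ (k:ℕ) :=
                  pow_le_pow_left₀ (norm_nonneg ω) (le_max_right _ _) _
              _ ≤ M ^ (2 * m - 1) := pow_le_pow_right₀ hM (by omega)
          exact mul_le_mul h1 h2 (by positivity) (by positivity)
      _ = R := by
          rw [Finset.sum_const, Finset.card_univ, Fintype.card_fin, nsmul_eq_mul]
          push_cast [hRdef]
          ring
  -- index map
  have hidx : ∀ x : ℝ, min (N - 1) (⌊(x + R) / δ⌋.toNat) < N := fun x =>
    lt_of_le_of_lt (min_le_left _ _) (by omega)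
  set g : (Fin (2 * m) → Fin H) → Fin N × Fin N := fun f =>
    (⟨_, hidx (v f).re⟩, ⟨_, hidx (v f).im⟩) with hgdef
  -- pigeonhole
  have hcard : Fintype.card (Fin N × Fin N) < Fintype.card (Fin (2 * m) → Fin H) := by
    rw [Fintype.card_prod, Fintype.card_fin, Fintype.card_fun, Fintype.card_fin, Fintype.card_fin]
    calc N * N < H ^ m * H ^ m := by
          have : N < H ^ m := by omega
          exact Nat.mul_lt_mul_of_lt_of_lt this this
      _ = H ^ (2 * m) := by rw [← pow_add]; ring_nf
  obtain ⟨f₁, -, f₂, -, hne, heq⟩ :=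
    Finset.exists_ne_map_eq_of_card_lt_of_maps_to
      (by simpa using hcard : (Finset.univ : Finset (Fin N × Fin N)).card <
        (Finset.univ : Finset (Fin (2 * m) → Fin H)).card)
      (fun a _ => Finset.mem_univ (g a))
  -- closeness of coordinates
  have hclose : ∀ x y : ℝ, |x| ≤ R → |y| ≤ R →
      min (N - 1) (⌊(x + R) / δ⌋.toNat) = min (N - 1) (⌊(y + R) / δ⌋.toNat) → |x - y| ≤ δ := by
    intro x y hx hy hxy
    have hbd : ∀ z : ℝ, |z| ≤ R → 0 ≤ (z + R) / δ ∧ (z + R) / δ ≤ N := by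
      intro z hz
      rw [abs_le] at hz
      constructor
      · apply div_nonneg _ hδ.le; linarith
      · rw [div_le_iff₀ hδ, hδdef]
        field_simp
        linarith
    obtain ⟨hx0, hxN⟩ := hbd x hx
    obtain ⟨hy0, hyN⟩ := hbd y hy
    obtain ⟨hx1, hx2⟩ := cell_le hN hx0 hxN
    obtain ⟨hy1, hy2⟩ := cell_le hN hy0 hyN
    rw [hxy] at hx1 hx2
    have h1 : |(x + R) / δ - (y + R) / δ| ≤ 1 := by rw [abs_le]; constructor <;> linarith
    have h2 : (x + R) / δ - (y + R) / δ = (x - y) / δ := by ring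
    rw [h2, abs_div, abs_of_pos hδ, div_le_one hδ] at h1
    exact h1
  have hre : |(v f₁).re - (v f₂).re| ≤ δ := by
    apply hclose _ _ (le_trans (Complex.abs_re_le_norm _) (hv f₁))
      (le_trans (Complex.abs_re_le_norm _) (hv f₂))
    have := congrArg (fun p => (p.1 : Fin N).val) heq
    simpa [hgdef] using this
  have him : |(v f₁).im - (v f₂).im| ≤ δ := by
    apply hclose _ _ (le_trans (Complex.abs_im_le_norm _) (hv f₁))
      (le_trans (Complex.abs_im_le_norm _) (hv f₂))
    have := congrArg (fun p => (p.2 : Fin N).val) heq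
    simpa [hgdef] using this
  have hdiff : ‖v f₁ - v f₂‖ ≤ 2 * δ := by
    calc ‖v f₁ - v f₂‖ ≤ |(v f₁ - v f₂).re| + |(v f₁ - v f₂).im| :=
          Complex.norm_le_abs_re_add_abs_im _
      _ ≤ 2 * δ := by rw [Complex.sub_re, Complex.sub_im]; linarith
  -- the polynomial
  set Q : Polynomial ℤ := ∑ k : Fin (2 * m),
    C (((f₁ k : ℕ) : ℤ) - ((f₂ k : ℕ) : ℤ)) * X ^ (k : ℕ) with hQdef
  have hcoeff : ∀ j : Fin (2 * m), Q.coeff (j : ℕ) = ((f₁ j : ℕ) : ℤ) - ((f₂ j : ℕ) : ℤ) := by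
    intro j
    rw [hQdef, finset_sum_coeff]
    rw [Finset.sum_eq_single j]
    · rw [coeff_C_mul, coeff_X_pow, if_pos rfl, mul_one]
    · intro k _ hkj
      simp only [coeff_C_mul, coeff_X_pow]
      rw [if_neg (fun h => hkj (Fin.ext h.symm))]
      ring
    · intro h; exact absurd (Finset.mem_univ j) h
  have hcoeff0 : ∀ j : ℕ, 2 * m ≤ j → Q.coeff j = 0 := by
    intro j hj
    rw [hQdef, finset_sum_coeff]
    apply Finset.sum_eq_zero
    intro k _
    simp only [coeff_C_mul, coeff_X_pow]
    rw [if_neg (by omega : ¬ j = (k : ℕ))]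
    ring
  obtain ⟨k₀, hk₀⟩ := Function.ne_iff.mp hne
  have hQne : Q ≠ 0 := by
    intro h0
    apply hk₀
    have := hcoeff k₀
    rw [h0, coeff_zero] at this
    have hv : ((f₁ k₀ : ℕ) : ℤ) = ((f₂ k₀ : ℕ) : ℤ) := by linarith [this.symm]
    exact Fin.ext (by exact_mod_cast hv)
  have hdeg : Q.natDegree ≤ 2 * m - 1 := by
    rw [hQdef]
    apply natDegree_sum_le_of_forall_le
    intro k _
    exact le_trans (natDegree_C_mul_X_pow_le _ _) (by omega)
  have hheight : polyHeight Q ≤ H := by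
    apply Finset.sup_le
    intro b _
    by_cases hb : b < 2 * m
    · rw [show b = ((⟨b, hb⟩ : Fin (2 * m)) : ℕ) from rfl, hcoeff ⟨b, hb⟩]
      have h1 : (f₁ ⟨b, hb⟩ : ℕ) < H := (f₁ ⟨b, hb⟩).isLt
      have h2 : (f₂ ⟨b, hb⟩ : ℕ) < H := (f₂ ⟨b, hb⟩).isLt
      omega
    · rw [hcoeff0 b (by omega)]; simp
  have haeval : Polynomial.aeval ω Q = v f₁ - v f₂ := by
    rw [hQdef, map_sum]
    rw [hvdef]
    rw [← Finset.sum_sub_distrib]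
    apply Finset.sum_congr rfl
    intro k _
    simp only [map_mul, aeval_C, map_pow, aeval_X]
    push_cast
    ring
  have habs : ‖Polynomial.aeval ω Q‖ ≤ 2 * δ := by rw [haeval]; exact hdiff
  have hQω : Polynomial.aeval ω Q ≠ 0 := by
    intro h0
    apply hω
    refine ⟨Q.map (algebraMap ℤ ℚ), ?_, ?_⟩
    · exact (Polynomial.map_ne_zero_iff (algebraMap ℤ ℚ).injective_int).mpr hQne
    · rw [aeval_map_algebraMap]; exact h0
  refine ⟨Q, hQne, hdeg, by exact_mod_cast hheight, ?_, ?_⟩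
  · exact norm_pos_iff.mpr hQω
  · apply le_trans habs
    have hHmR : (0:ℝ) < (H:ℝ)^m := by positivity
    have h2N : ((H:ℝ))^m ≤ 2 * (N:ℝ) := by
      exact_mod_cast (by omega : H ^ m ≤ 2 * N)
    have h4 : 2 * δ = 4 * R / (N:ℝ) := by rw [hδdef]; ring
    have h8 : 8 * (2 * (m:ℝ) * H * M ^ (2 * m - 1)) / (H:ℝ) ^ m = 8 * R / (H:ℝ) ^ m := by
      rw [hRdef]
    rw [h4, h8, div_le_div_iff₀ hNpos hHmR]
    nlinarith [mul_le_mul_of_nonneg_left h2N (by positivity : (0:ℝ) ≤ 4 * R)]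

set_option maxHeartbeats 1600000 in
/-- Any transcendence type of a transcendental number is at least `2`. -/
theorem transcendence_type_ge_two (ω : ℂ) (hω : Transcendental ℚ ω)
    (τ : ℝ) (hτ : 0 < τ) (h : IsTranscendenceType ω τ) : 2 ≤ τ := by
  by_contra hlt
  push_neg at hlt
  obtain ⟨c, hc, hmeas⟩ := h
  have hM : 1 ≤ max 1 (‖ω‖) := le_max_left _ _
  set L : ℝ := Real.log (max 1 (‖ω‖)) with hLdef
  have hL : 0 ≤ L := Real.log_nonneg hM
  set K : ℝ := 2 * c * (3:ℝ) ^ τ with hKdef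
  have h3τ : (0:ℝ) < (3:ℝ) ^ τ := Real.rpow_pos_of_pos (by norm_num) τ
  have hK : 0 < K := by rw [hKdef]; positivity
  set Cst : ℝ := 33 + 2 * L with hCdef
  have hCst : 0 < Cst := by rw [hCdef]; positivity
  -- main estimate
  have main : ∀ m : ℕ, 1 ≤ m →
      ((2*m-1 : ℕ):ℝ)^2 ≤ K * ((2*m-1:ℕ):ℝ) ^ τ + Cst * ((2*m-1:ℕ):ℝ) := by
    intro m hm
    set n : ℕ := 2*m-1 with hndef
    have hmR : (1:ℝ) ≤ (m:ℝ) := by exact_mod_cast hm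
    have hn1 : 1 ≤ n := by omega
    have hnR : (1:ℝ) ≤ (n:ℝ) := by exact_mod_cast hn1
    have hnm : (n:ℝ) = 2*(m:ℝ) - 1 := by
      rw [hndef, Nat.cast_sub (by omega : 1 ≤ 2*m)]
      push_cast; ring
    have hmn : (m:ℝ) ≤ (n:ℝ) := by linarith
    set H : ℕ := ⌈Real.exp n⌉₊ with hHdef
    have hexp : Real.exp n ≤ H := Nat.le_ceil _
    have hen : (n:ℝ) + 1 ≤ Real.exp n := Real.add_one_le_exp _
    have hHR2 : (2:ℝ) ≤ (H:ℝ) := by linarith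
    have hH2 : 2 ≤ H := by exact_mod_cast hHR2
    have hHpos : (0:ℝ) < H := by linarith
    have hlog1 : (n:ℝ) ≤ Real.log H := by
      rw [← Real.log_exp (n:ℝ)]
      exact Real.log_le_log (Real.exp_pos _) hexp
    have hlog2 : Real.log H ≤ (n:ℝ) + 1 := by
      have h1 : (H:ℝ) < Real.exp n + 1 := Nat.ceil_lt_add_one (Real.exp_pos _).le
      have h2 : Real.exp n + 1 ≤ Real.exp ((n:ℝ)+1) := by
        rw [Real.exp_add]
        have e1 : (2:ℝ) ≤ Real.exp 1 := by linarith [Real.add_one_le_exp (1:ℝ)]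
        have e2 : (1:ℝ) ≤ Real.exp (n:ℝ) := Real.one_le_exp (by linarith)
        nlinarith
      calc Real.log H ≤ Real.log (Real.exp ((n:ℝ)+1)) :=
            Real.log_le_log hHpos (by linarith)
        _ = (n:ℝ)+1 := Real.log_exp _
    obtain ⟨Q, hQne, hdeg, hheight, hpos, habs⟩ := key ω hω m H hm hH2
    rw [← hndef] at hdeg habs
    have hmea := hmeas n (H:ℝ) Q hQne hdeg hheight
    have hlogQ : Real.log (‖Polynomial.aeval ω Q‖) ≤
        Real.log (8 * (2*(m:ℝ)*(H:ℝ)*(max 1 (‖ω‖))^n) / (H:ℝ)^m) :=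
      Real.log_le_log hpos habs
    have hmpos : (0:ℝ) < (m:ℝ) := by linarith
    have hBlog : Real.log (8 * (2*(m:ℝ)*(H:ℝ)*(max 1 (‖ω‖))^n) / (H:ℝ)^m) =
        Real.log (16*(m:ℝ)) + Real.log (H:ℝ) + (n:ℝ)*L - (m:ℝ)*Real.log (H:ℝ) := by
      have hMpos : (0:ℝ) < max 1 (‖ω‖) := by linarith
      rw [show (8:ℝ) * (2*(m:ℝ)*(H:ℝ)*(max 1 (‖ω‖))^n)
            = (16*(m:ℝ)) * (H:ℝ) * (max 1 (‖ω‖))^n by ring]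
      rw [Real.log_div (by positivity) (by positivity), Real.log_pow,
        Real.log_mul (by positivity) (by positivity),
        Real.log_mul (by positivity) (by positivity), Real.log_pow, hLdef]
    have hchain : -(c * ((n:ℝ) + Real.log (H:ℝ)) ^ τ) ≤
        Real.log (16*(m:ℝ)) + Real.log (H:ℝ) + (n:ℝ)*L - (m:ℝ)*Real.log (H:ℝ) := by
      rw [← hBlog]; exact le_trans hmea hlogQ
    have hlog16m : Real.log (16*(m:ℝ)) ≤ 16*(m:ℝ) := by
      have := Real.log_le_sub_one_of_pos (show (0:ℝ) < 16*(m:ℝ) by linarith)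
      linarith
    have hrpow : c * ((n:ℝ) + Real.log (H:ℝ)) ^ τ ≤ c * ((3:ℝ)^τ * (n:ℝ)^τ) := by
      have h3 : (n:ℝ) + Real.log (H:ℝ) ≤ 3*(n:ℝ) := by linarith
      have h0 : (0:ℝ) ≤ (n:ℝ) + Real.log (H:ℝ) := by linarith
      have h4 := Real.rpow_le_rpow h0 h3 hτ.le
      rw [Real.mul_rpow (by norm_num) (by linarith : (0:ℝ) ≤ (n:ℝ))] at h4
      exact mul_le_mul_of_nonneg_left h4 hc.le
    have e1 : ((m:ℝ)-1) * (n:ℝ) ≤ ((m:ℝ)-1) * Real.log (H:ℝ) :=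
      mul_le_mul_of_nonneg_left hlog1 (by linarith)
    have e2 : ((m:ℝ)-1) * Real.log (H:ℝ) = (m:ℝ)*Real.log (H:ℝ) - Real.log (H:ℝ) := by ring
    have e3 : ((m:ℝ)-1) * (n:ℝ) = ((n:ℝ)^2 - (n:ℝ))/2 := by rw [hnm]; ring
    have hKeq : K * (n:ℝ)^τ = 2*(c*((3:ℝ)^τ * (n:ℝ)^τ)) := by rw [hKdef]; ring
    have hCeq : Cst * (n:ℝ) = 33*(n:ℝ) + 2*(n:ℝ)*L := by rw [hCdef]; ring
    rw [hKeq, hCeq]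
    linarith [hchain, hrpow, hlog16m, e1, e2, e3, hmn, hL, hnR]
  -- contradiction
  have hs : 0 < 2 - τ := by linarith
  set T : ℝ := max (2*Cst) (max 1 ((2*K) ^ (2-τ)⁻¹)) with hTdef
  set m : ℕ := ⌈T⌉₊ + 1 with hmdef
  have hm1 : 1 ≤ m := by omega
  have hmain := main m hm1
  set n : ℕ := 2*m-1 with hndef
  have hTm : T < (m:ℝ) := by
    calc T ≤ (⌈T⌉₊:ℝ) := Nat.le_ceil T
      _ < (m:ℝ) := by exact_mod_cast Nat.lt_succ_self _
  have hmn : (m:ℝ) ≤ (n:ℝ) := by exact_mod_cast (by omega : m ≤ n)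
  have hTn : T < (n:ℝ) := lt_of_lt_of_le hTm hmn
  have hT1 : (1:ℝ) ≤ T := le_trans (le_max_left 1 _) (le_max_right _ _)
  have hnpos : (0:ℝ) < (n:ℝ) := by linarith
  have hCn : 2*Cst < (n:ℝ) := lt_of_le_of_lt (le_max_left _ _) hTn
  have h2K : 2*K < (n:ℝ)^(2-τ) := by
    have h1 : (2*K) ^ (2-τ)⁻¹ < (n:ℝ) :=
      lt_of_le_of_lt (le_trans (le_max_right _ _) (le_max_right _ _)) hTn
    have h0 : (0:ℝ) ≤ (2*K) ^ (2-τ)⁻¹ := Real.rpow_nonneg (by positivity) _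
    have h2 := Real.rpow_lt_rpow h0 h1 hs
    rwa [Real.rpow_inv_rpow (by positivity) hs.ne'] at h2
  have hsplit : (n:ℝ)^τ * (n:ℝ)^(2-τ) = (n:ℝ)^2 := by
    have he : τ + (2 - τ) = ((2:ℕ):ℝ) := by norm_num
    rw [← Real.rpow_add hnpos, he, Real.rpow_natCast]
  have hτn : 0 < (n:ℝ)^τ := Real.rpow_pos_of_pos hnpos _
  have h1 : K * (n:ℝ)^τ < (n:ℝ)^2 / 2 := by
    nlinarith [mul_pos (sub_pos.mpr h2K) hτn, hsplit]
  have h2 : Cst * (n:ℝ) < (n:ℝ)^2 / 2 := by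
    nlinarith [mul_pos (sub_pos.mpr hCn) hnpos]
  set_option maxHeartbeats 1000000 in
  nlinarith [hmain, h1, h2]
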